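/- If all the lifetimes T^{(l)}_j are mutually independent and for each type l all type-l lifetimes have common distribution function F_l (with F̄_l := 1 − F_l), then for every t ≥ 0 the system reliability satisfies P(T > t) = Σ_{l_1=0}^{n_1} ⋯ Σ_{l_L=0}^{n_L} Φ(l_1,…,l_L) ∏_{k=1}^L C(n_k, l_k) · F̄_k(t)^{l_k} · F_k(t)^{n_k−l_k}. -/

import Mathlib

open MeasureTheory Finset ProbabilityTheory

/-- The survival signature of a structure function `φ`:
`Φ(c) = (∏_k C(n_k, c_k))⁻¹ · Σ_{x : exactly c_k working components of each type k} φ(x)`. -/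
noncomputable def survSig {L : ℕ} (n : Fin L → ℕ)
    (φ : ((l : Fin L) → Fin (n l) → Bool) → Bool) (c : Fin L → ℕ) : ℝ :=
  (∑ x : (l : Fin L) → Fin (n l) → Bool,
      if (∀ l, (Finset.univ.filter fun j => x l j = true).card = c l) ∧ φ x = true
      then (1 : ℝ) else 0)
    / ∏ l, (Nat.choose (n l) (c l) : ℝ)

/-- For mutually independent lifetimes with common type-`l` distribution
function `F_l`, the system reliability is
`P(T > t) = Σ_l Φ(l) ∏_k C(n_k, l_k) F̄_k(t)^{l_k} F_k(t)^{n_k−l_k}`. -/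
theorem stmt_6
    {Ω : Type*} [MeasurableSpace Ω] (P : Measure Ω) [IsProbabilityMeasure P]
    {L : ℕ} (hL : 1 ≤ L) (n : Fin L → ℕ) (hn : ∀ l, 1 ≤ n l)
    (T : (l : Fin L) → Fin (n l) → Ω → ℝ)
    (hTmeas : ∀ l j, Measurable (T l j))
    (hindep : iIndepFun
      (fun p : Σ l : Fin L, Fin (n l) => fun ω => T p.1 p.2 ω) P)
    (F : Fin L → ℝ → ℝ)
    (hF : ∀ l j x, (P {ω | T l j ω ≤ x}).toReal = F l x)
    (φ : ((l : Fin L) → Fin (n l) → Bool) → Bool) (hφ : Monotone φ)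
    (Tsys : Ω → ℝ) (hTsys : Measurable Tsys)
    (hT : ∀ t : ℝ, 0 ≤ t →
      {ω | t < Tsys ω} = {ω | φ (fun l j => decide (t < T l j ω)) = true})
    (t : ℝ) (ht : 0 ≤ t) :
    (P {ω | t < Tsys ω}).toReal
    = ∑ l : (k : Fin L) → Fin (n k + 1),
        survSig n φ (fun k => (l k : ℕ))
          * ∏ k, (Nat.choose (n k) (l k) : ℝ)
              * (1 - F k t) ^ (l k : ℕ) * F k t ^ (n k - (l k : ℕ)) := by
  classical
  -- the random state vector
  set X : Ω → ((l : Fin L) → Fin (n l) → Bool) := fun ω l j => decide (t < T l j ω) with hX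
  -- sets in ℝ
  set S : Bool → Set ℝ := fun b => if b then Set.Ioi t else Set.Iic t with hS
  have hSmeas : ∀ b, MeasurableSet (S b) := by
    intro b; cases b <;> simp [hS, measurableSet_Ioi, measurableSet_Iic]
  have hmemS : ∀ (b : Bool) (y : ℝ), y ∈ S b ↔ decide (t < y) = b := by
    intro b y; cases b <;> simp [hS, not_lt]
  -- the count function
  set cnt : ((l : Fin L) → Fin (n l) → Bool) → Fin L → ℕ :=
    fun x l => (Finset.univ.filter fun j => x l j = true).card with hcnt
  have hcnt_le : ∀ x l, cnt x l ≤ n l := by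
    intro x l
    simpa using Finset.card_filter_le (Finset.univ : Finset (Fin (n l))) _
  -- per-component probabilities (real valued)
  set w : Fin L → Bool → ℝ := fun l b => if b then 1 - F l t else F l t with hw
  have hIic : ∀ l j, (P (T l j ⁻¹' Set.Iic t)).toReal = F l t := by
    intro l j
    have : T l j ⁻¹' Set.Iic t = {ω | T l j ω ≤ t} := rfl
    rw [this]; exact hF l j t
  have hne : ∀ l j, P {ω | T l j ω ≤ t} ≠ ⊤ := fun l j => measure_ne_top P _
  have hIoi : ∀ l j, (P (T l j ⁻¹' Set.Ioi t)).toReal = 1 - F l t := by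
    intro l j
    have hc : T l j ⁻¹' Set.Ioi t = (T l j ⁻¹' Set.Iic t)ᶜ := by
      ext ω; simp [not_le]
    rw [hc, prob_compl_eq_one_sub ((hTmeas l j) measurableSet_Iic),
      ENNReal.toReal_sub_of_le prob_le_one ENNReal.one_ne_top, ENNReal.toReal_one, hIic]
  have hcomp : ∀ (p : Σ l : Fin L, Fin (n l)) (b : Bool),
      (P (T p.1 p.2 ⁻¹' S b)).toReal = w p.1 b := by
    rintro ⟨l, j⟩ b
    cases b <;> simp [hS, hw, hIic, hIoi]
  -- the probability of each atomic state
  have hatom : ∀ x : (l : Fin L) → Fin (n l) → Bool,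
      (P {ω | X ω = x}).toReal = ∏ p : Σ l : Fin L, Fin (n l), w p.1 (x p.1 p.2) := by
    intro x
    have hset : {ω | X ω = x}
        = ⋂ p : Σ l : Fin L, Fin (n l), T p.1 p.2 ⁻¹' S (x p.1 p.2) := by
      ext ω
      simp only [Set.mem_setOf_eq, Set.mem_iInter, Set.mem_preimage, hmemS, hX]
      constructor
      · intro h p; rw [← h]
      · intro h; funext l j; exact h ⟨l, j⟩
    rw [hset, hindep.meas_iInter (fun p => ⟨S (x p.1 p.2), hSmeas _, rfl⟩),
      ENNReal.toReal_prod]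
    exact Finset.prod_congr rfl fun p _ => hcomp p _
  -- measurability of atomic events
  have hatom_meas : ∀ x : (l : Fin L) → Fin (n l) → Bool, MeasurableSet {ω | X ω = x} := by
    intro x
    have hset : {ω | X ω = x}
        = ⋂ p : Σ l : Fin L, Fin (n l), T p.1 p.2 ⁻¹' S (x p.1 p.2) := by
      ext ω
      simp only [Set.mem_setOf_eq, Set.mem_iInter, Set.mem_preimage, hmemS, hX]
      constructor
      · intro h p; rw [← h]
      · intro h; funext l j; exact h ⟨l, j⟩
    rw [hset]
    exact MeasurableSet.iInter fun p => (hTmeas p.1 p.2) (hSmeas _)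
  -- decomposition of the system event
  have hdecomp : (P {ω | t < Tsys ω}).toReal
      = ∑ x : (l : Fin L) → Fin (n l) → Bool,
          if φ x = true then (P {ω | X ω = x}).toReal else 0 := by
    rw [hT t ht]
    have hunion : {ω | φ (fun l j => decide (t < T l j ω)) = true}
        = ⋃ x ∈ Finset.univ.filter (fun x => φ x = true), {ω | X ω = x} := by
      ext ω
      simp only [Set.mem_setOf_eq, Set.mem_iUnion, Finset.mem_filter, Finset.mem_univ,
        true_and, hX]
      constructor
      · intro h; exact ⟨fun l j => decide (t < T l j ω), h, rfl⟩
      · rintro ⟨x, hx, rfl⟩; exact hx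
    rw [hunion, measure_biUnion_finset ?_ (fun x _ => hatom_meas x)]
    · rw [ENNReal.toReal_sum (fun x _ => measure_ne_top P _), Finset.sum_filter]
    · intro x _ y _ hxy
      simp only [Function.onFun, Set.disjoint_left]
      intro ω h1 h2
      exact hxy (h1.symm.trans h2)
  -- product of weights equals counted form
  have hprodw : ∀ x : (l : Fin L) → Fin (n l) → Bool,
      (∏ p : Σ l : Fin L, Fin (n l), w p.1 (x p.1 p.2))
        = ∏ k, (1 - F k t) ^ cnt x k * F k t ^ (n k - cnt x k) := by
    intro x
    rw [← Finset.univ_sigma_univ, Finset.prod_sigma]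
    refine Finset.prod_congr rfl fun l _ => ?_
    have : (∏ j, w l (x l j))
        = ∏ j, (if x l j = true then (1 - F l t) else F l t) := by
      refine Finset.prod_congr rfl fun j _ => ?_
      cases h : x l j <;> simp [hw, h]
    rw [this, Finset.prod_ite, Finset.prod_const, Finset.prod_const]
    have h := Finset.card_filter_add_card_filter_not
      (s := (Finset.univ : Finset (Fin (n l)))) (p := fun j => x l j = true)
    simp only [Finset.card_univ, Fintype.card_fin, Bool.not_eq_true] at h
    congr 1
    simp only [hcnt, Bool.not_eq_true]
    rw [show #(Finset.filter (fun j => x l j = false) (Finset.univ : Finset (Fin (n l))))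
        = n l - #(Finset.filter (fun j => x l j = true) (Finset.univ : Finset (Fin (n l))))
      from by omega]
  -- LHS in summed form over states
  have hLHS : (P {ω | t < Tsys ω}).toReal
      = ∑ x : (l : Fin L) → Fin (n l) → Bool,
          if φ x = true
          then ∏ k, (1 - F k t) ^ cnt x k * F k t ^ (n k - cnt x k) else 0 := by
    rw [hdecomp]
    refine Finset.sum_congr rfl fun x _ => ?_
    by_cases h : φ x = true <;> simp [h, hatom x, hprodw x]
  rw [hLHS]
  -- now the combinatorial identity
  have hterm : ∀ c : (k : Fin L) → Fin (n k + 1),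
      survSig n φ (fun k => (c k : ℕ))
          * ∏ k, (Nat.choose (n k) (c k) : ℝ)
              * (1 - F k t) ^ (c k : ℕ) * F k t ^ (n k - (c k : ℕ))
      = ∑ x : (l : Fin L) → Fin (n l) → Bool,
          if (∀ l, cnt x l = (c l : ℕ)) ∧ φ x = true
          then ∏ k, (1 - F k t) ^ (c k : ℕ) * F k t ^ (n k - (c k : ℕ)) else 0 := by
    intro c
    have hchoose : (∏ k, (Nat.choose (n k) (c k) : ℝ)) ≠ 0 := by
      refine Finset.prod_ne_zero_iff.2 fun k _ => ?_
      have : (c k : ℕ) ≤ n k := Nat.lt_succ_iff.mp (c k).2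
      exact_mod_cast (Nat.choose_pos this).ne'
    have hsplit : (∏ k, (Nat.choose (n k) (c k) : ℝ)
              * (1 - F k t) ^ (c k : ℕ) * F k t ^ (n k - (c k : ℕ)))
        = (∏ k, (Nat.choose (n k) (c k) : ℝ))
          * ∏ k, (1 - F k t) ^ (c k : ℕ) * F k t ^ (n k - (c k : ℕ)) := by
      rw [← Finset.prod_mul_distrib]
      exact Finset.prod_congr rfl fun k _ => by ring
    have hcancel : ∀ (A B C : ℝ), C ≠ 0 → A / C * (C * B) = A * B := by
      intro A B C hC; field_simp
    rw [hsplit]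
    simp only [survSig]
    rw [hcancel _ _ _ hchoose, Finset.sum_mul]
    refine Finset.sum_congr rfl fun x _ => ?_
    by_cases h : (∀ l, cnt x l = (c l : ℕ)) ∧ φ x = true
    · simp only [hcnt] at h ⊢
      rw [if_pos h, if_pos h, one_mul]
    · simp only [hcnt] at h ⊢
      rw [if_neg h, if_neg h, zero_mul]
  rw [Finset.sum_congr rfl fun c _ => hterm c, Finset.sum_comm]
  refine Finset.sum_congr rfl fun x _ => ?_
  by_cases hx : φ x = true
  · -- unique c equal to cnt x
    have hclt : ∀ k, cnt x k < n k + 1 := fun k => Nat.lt_succ_of_le (hcnt_le x k)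
    set c0 : (k : Fin L) → Fin (n k + 1) := fun k => ⟨cnt x k, hclt k⟩ with hc0
    rw [Finset.sum_eq_single c0]
    · simp [hx, hc0]
    · intro c _ hc
      rw [if_neg]
      rintro ⟨hall, -⟩
      exact hc (by funext k; exact Fin.ext ((hall k).symm))
    · intro h; exact absurd (Finset.mem_univ c0) h
  · rw [if_neg hx]
    exact (Finset.sum_eq_zero fun c _ => if_neg fun h => hx h.2).symm
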